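/- Let (Ω, F, P) be a probability space, X : Ω → ℝ^p a measurable random vector, and Y, S : Ω → {0,1} random variables with S ≤ Y almost surely. Suppose y, e, h : ℝ^p → [0,1] are Borel measurable functions such that: (i) y(X) is a version of E[Y | σ(X)]; (ii) e(X)·y(X) is a version of E[S | σ(X)]; and (iii) S + (1 − S)·h(X) is a version of E[Y | σ(X, S)]. Then almost surely h(X)·(1 − e(X)·y(X)) = y(X)·(1 − e(X)); that is, the conditional posterior probability of Y = 1 for an unlabeled instance satisfies h(x) = y(x)(1 − e(x)) / (1 − y(x)e(x)) whenever y(x)e(x) < 1. -/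

import Mathlib

open MeasureTheory ProbabilityTheory

/-- Equation (10) of the paper: in the PU setting, if `y(X)` is a version of `E[Y | σ(X)]`,
`e(X)·y(X)` is a version of `E[S | σ(X)]`, and `S + (1−S)·h(X)` is a version of
`E[Y | σ(X,S)]`, then almost surely `h(X)·(1 − e(X)·y(X)) = y(X)·(1 − e(X))`, i.e.
`h(x) = y(x)(1 − e(x))/(1 − y(x)e(x))` whenever `y(x)e(x) < 1`. -/
theorem conditional_posterior_unlabeled
    {Ω : Type*} [MeasurableSpace Ω] (μ : Measure Ω) [IsProbabilityMeasure μ]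
    (p : ℕ) (X : Ω → Fin p → ℝ) (Y S : Ω → ℝ)
    (hX : Measurable X) (hY : Measurable Y) (hS : Measurable S)
    (hY01 : ∀ ω, Y ω = 0 ∨ Y ω = 1) (hS01 : ∀ ω, S ω = 0 ∨ S ω = 1)
    -- negative examples cannot be labeled: S ≤ Y a.s.
    (hSY : ∀ᵐ ω ∂μ, S ω ≤ Y ω)
    (y e h : (Fin p → ℝ) → ℝ)
    (hy : Measurable y) (he : Measurable e) (hh : Measurable h)
    (hy01 : ∀ x, y x ∈ Set.Icc (0 : ℝ) 1) (he01 : ∀ x, e x ∈ Set.Icc (0 : ℝ) 1)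
    (hh01 : ∀ x, h x ∈ Set.Icc (0 : ℝ) 1)
    -- (i) y(X) is a version of E[Y | σ(X)]
    (hcondY : (μ[Y | MeasurableSpace.comap X inferInstance]) =ᵐ[μ] fun ω => y (X ω))
    -- (ii) e(X)·y(X) is a version of E[S | σ(X)]
    (hcondS : (μ[S | MeasurableSpace.comap X inferInstance])
      =ᵐ[μ] fun ω => e (X ω) * y (X ω))
    -- (iii) S + (1 − S)·h(X) is a version of E[Y | σ(X,S)]
    (hcondYS : (μ[Y | MeasurableSpace.comap (fun ω => (X ω, S ω)) inferInstance])
      =ᵐ[μ] fun ω => S ω + (1 - S ω) * h (X ω)) :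
    ∀ᵐ ω ∂μ, h (X ω) * (1 - e (X ω) * y (X ω)) = y (X ω) * (1 - e (X ω)) := by
  have hle12 : MeasurableSpace.comap X inferInstance ≤
      MeasurableSpace.comap (fun ω => (X ω, S ω)) inferInstance := by
    rintro s ⟨t, ht, rfl⟩
    exact ⟨t ×ˢ Set.univ, ht.prod MeasurableSet.univ, by ext ω; simp⟩
  have hle2 : MeasurableSpace.comap (fun ω => (X ω, S ω)) inferInstance ≤
      ‹MeasurableSpace Ω› := (hX.prodMk hS).comap_le
  have hXm : Measurable[MeasurableSpace.comap X inferInstance] X := fun t ht => ⟨t, ht, rfl⟩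
  have hgXm : StronglyMeasurable[MeasurableSpace.comap X inferInstance]
      (fun ω => 1 - h (X ω)) :=
    ((measurable_const.sub (hh.comp hXm))).stronglyMeasurable
  have hhXm : StronglyMeasurable[MeasurableSpace.comap X inferInstance]
      (fun ω => h (X ω)) := ((hh.comp hXm)).stronglyMeasurable
  have hbdd : ∀ (f : Ω → ℝ), Measurable f → (∀ ω, |f ω| ≤ 1) → Integrable f μ := by
    intro f hf hb
    exact (integrable_const (1 : ℝ)).mono' hf.aestronglyMeasurable (ae_of_all _ hb)
  have hYint : Integrable Y μ := hbdd Y hY (fun ω => by rcases hY01 ω with h' | h' <;> simp [h'])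
  have hSint : Integrable S μ := hbdd S hS (fun ω => by rcases hS01 ω with h' | h' <;> simp [h'])
  have habs : ∀ x, |h x| ≤ 1 := fun x => abs_le.mpr ⟨by linarith [(hh01 x).1], (hh01 x).2⟩
  have hgabs : ∀ x, |1 - h x| ≤ 1 := fun x =>
    abs_le.mpr ⟨by linarith [(hh01 x).2], by linarith [(hh01 x).1]⟩
  have hSmul_int : Integrable (fun ω => (1 - h (X ω)) * S ω) μ := by
    refine hbdd _ ((measurable_const.sub (hh.comp hX)).mul hS) ?_
    intro ω
    rcases hS01 ω with h' | h' <;> simp [h', abs_mul] <;>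
      simpa using hgabs (X ω)
  have hhXint : Integrable (fun ω => h (X ω)) μ := hbdd _ (hh.comp hX) (fun ω => habs _)
  have tower : μ[Y | MeasurableSpace.comap X inferInstance] =ᵐ[μ]
      μ[μ[Y | MeasurableSpace.comap (fun ω => (X ω, S ω)) inferInstance] |
        MeasurableSpace.comap X inferInstance] :=
    (condExp_condExp_of_le hle12 hle2).symm
  have step1 : μ[μ[Y | MeasurableSpace.comap (fun ω => (X ω, S ω)) inferInstance] |
        MeasurableSpace.comap X inferInstance]
      =ᵐ[μ] μ[(fun ω => (1 - h (X ω)) * S ω + h (X ω)) |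
        MeasurableSpace.comap X inferInstance] := by
    refine condExp_congr_ae (hcondYS.trans (ae_of_all _ fun ω => ?_))
    ring
  have step2 : μ[(fun ω => (1 - h (X ω)) * S ω + h (X ω)) |
        MeasurableSpace.comap X inferInstance]
      =ᵐ[μ] μ[(fun ω => (1 - h (X ω)) * S ω) | MeasurableSpace.comap X inferInstance]
        + μ[(fun ω => h (X ω)) | MeasurableSpace.comap X inferInstance] :=
    condExp_add hSmul_int hhXint _
  have step3 : μ[(fun ω => h (X ω)) | MeasurableSpace.comap X inferInstance]
      =ᵐ[μ] fun ω => h (X ω) :=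
    by rw [condExp_of_stronglyMeasurable (hle12.trans hle2) hhXm hhXint]
  have step4 : μ[(fun ω => (1 - h (X ω)) * S ω) | MeasurableSpace.comap X inferInstance]
      =ᵐ[μ] (fun ω => 1 - h (X ω)) * μ[S | MeasurableSpace.comap X inferInstance] :=
    condExp_mul_of_stronglyMeasurable_left hgXm hSmul_int hSint
  have key : (fun ω => y (X ω)) =ᵐ[μ]
      fun ω => (1 - h (X ω)) * (e (X ω) * y (X ω)) + h (X ω) := by
    calc (fun ω => y (X ω)) =ᵐ[μ] μ[Y | MeasurableSpace.comap X inferInstance] := hcondY.symm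
      _ =ᵐ[μ] _ := tower
      _ =ᵐ[μ] _ := step1
      _ =ᵐ[μ] _ := step2
      _ =ᵐ[μ] (fun ω => 1 - h (X ω)) * μ[S | MeasurableSpace.comap X inferInstance]
          + fun ω => h (X ω) := Filter.EventuallyEq.add step4 step3
      _ =ᵐ[μ] fun ω => (1 - h (X ω)) * (e (X ω) * y (X ω)) + h (X ω) := by
          filter_upwards [hcondS] with ω hω
          simp [hω]
  filter_upwards [key] with ω hω
  linear_combination (-1 : ℝ) * hω
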